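/- If G is a resource contribution game with independent objectives, then the three notions of Nash equilibrium coincide: NE^ct(G) = NE^ca(G) = NE^pca(G). -/

import Mathlib

open scoped Classical

/-- A resource contribution game over atomic resource type `Res` with player set `ι`:
each player has a goal (a resource bundle, i.e. a multiset of atomic resources) and
an endowment (a resource bag, i.e. a multiset of resource bundles). -/
structure RCG (Res ι : Type*) where
  goal : ι → Multiset Res
  endow : ι → Multiset (Multiset Res)

namespace RCG

variable {Res ι : Type*} [Fintype ι]

/-- A profile assigns to each player a bag (his contribution). -/
abbrev Profile (Res ι : Type*) := ι → Multiset (Multiset Res)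

/-- Outcome of a profile: the multiset sum of all contributions. -/
def out (P : Profile Res ι) : Multiset (Multiset Res) := ∑ i, P i

/-- The bag `X` can be transformed into the bundle `B`: `♭(B) ⊆ ♭•(X)`. -/
def Trans (X : Multiset (Multiset Res)) (B : Multiset Res) : Prop := B ≤ X.sum

/-- Player `i` is potentially satisfied by profile `P`. -/
def Psat (G : RCG Res ι) (P : Profile Res ι) (i : ι) : Prop :=
  Trans (out P) (G.goal i)

/-- The set of players potentially satisfied by `P`. -/
noncomputable def psatPlayers (G : RCG Res ι) (P : Profile Res ι) : Finset ι :=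
  Finset.univ.filter fun i => Psat G P i

/-- The profile `P` is contentious. -/
def Contentious (G : RCG Res ι) (P : Profile Res ι) : Prop :=
  ¬ Trans (out P) (∑ j ∈ psatPlayers G P, G.goal j)

/-- Restriction of bundle `B` to the resource types occurring in `C`. -/
noncomputable def restr (B C : Multiset Res) : Multiset Res := B.filter (· ∈ C)

/-- The profile `P` is contentious for player `i`. -/
def ContentiousFor (G : RCG Res ι) (P : Profile Res ι) (i : ι) : Prop :=
  Psat G P i ∧ ¬ Trans (out P) (∑ j ∈ psatPlayers G P, restr (G.goal j) (G.goal i))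

/-- The three kinds of preferences: contention-tolerant, (public) contention-averse,
private contention-averse. -/
inductive Pref | ct | ca | pca

/-- `P` is a good profile for player `i` according to preference kind `pref`. -/
def Good (pref : Pref) (G : RCG Res ι) (P : Profile Res ι) (i : ι) : Prop :=
  match pref with
  | .ct => Psat G P i
  | .ca => Psat G P i ∧ ¬ Contentious G P
  | .pca => Psat G P i ∧ ¬ ContentiousFor G P i

/-- Player `i` strictly prefers `P` over `Q` (i.e. `Q ≺^pref_i P`). -/
def Prefers (pref : Pref) (G : RCG Res ι) (i : ι) (Q P : Profile Res ι) : Prop :=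
  (¬ Good pref G P i ∧ ¬ Good pref G Q i ∧ P i < Q i) ∨
  (Good pref G P i ∧ ¬ Good pref G Q i) ∨
  (Good pref G P i ∧ Good pref G Q i ∧ P i < Q i)

/-- `C` is a profitable deviation for player `i` from profile `P`. -/
noncomputable def ProfDev (pref : Pref) (G : RCG Res ι) (P : Profile Res ι) (i : ι)
    (C : Multiset (Multiset Res)) : Prop :=
  C ≤ G.endow i ∧ Prefers pref G i P (Function.update P i C)

/-- `P` is a pure Nash equilibrium of `G` according to `pref`:
`P` is a profile of `G` and no player has a profitable deviation. -/
noncomputable def NE (pref : Pref) (G : RCG Res ι) (P : Profile Res ι) : Prop :=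
  (∀ i, P i ≤ G.endow i) ∧ ∀ i C, ¬ ProfDev pref G P i C

/-- `G` is an RCG with endowments as bags of atomic resources. -/
def IsRCGBAR (G : RCG Res ι) : Prop :=
  ∀ i, ∀ B ∈ G.endow i, ∃ r : Res, B = {r}

/-- `G` has independent objectives. -/
def IndepObjectives (G : RCG Res ι) : Prop :=
  ∀ i j : ι, i ≠ j → ∀ r : Res, r ∈ G.goal i → r ∉ G.goal j

end RCG

section Aux
variable {Res ι : Type*} [Fintype ι]

lemma indep_not_contentious (G : RCG Res ι) (hind : RCG.IndepObjectives G)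
    (P : RCG.Profile Res ι) : ¬ RCG.Contentious G P := by
  intro h
  apply h
  rw [RCG.Trans, Multiset.le_iff_count]
  intro r
  rw [Multiset.count_sum']
  by_cases hr : ∃ j ∈ RCG.psatPlayers G P, r ∈ G.goal j
  · obtain ⟨j, hj, hrj⟩ := hr
    rw [Finset.sum_eq_single_of_mem j hj]
    · have := (Finset.mem_filter.mp hj).2
      exact Multiset.le_iff_count.mp this r
    · intro k hk hkj
      rw [Multiset.count_eq_zero]
      exact hind j k hkj.symm r hrj
  · push_neg at hr
    rw [Finset.sum_eq_zero]
    · exact Nat.zero_le _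
    · intro k hk
      rw [Multiset.count_eq_zero]
      exact hr k hk

lemma indep_not_contentiousFor (G : RCG Res ι) (hind : RCG.IndepObjectives G)
    (P : RCG.Profile Res ι) (i : ι) (hi : RCG.Psat G P i) :
    ¬ RCG.ContentiousFor G P i := by
  intro ⟨_, h⟩
  apply h
  have hmem : i ∈ RCG.psatPlayers G P := Finset.mem_filter.mpr ⟨Finset.mem_univ _, hi⟩
  have heq : ∑ j ∈ RCG.psatPlayers G P, RCG.restr (G.goal j) (G.goal i) =
      RCG.restr (G.goal i) (G.goal i) := by
    apply Finset.sum_eq_single_of_mem i hmem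
    intro k _ hki
    rw [RCG.restr, Multiset.filter_eq_nil.mpr]
    intro r hr
    exact hind k i hki r hr
  rw [heq, RCG.restr, Multiset.filter_eq_self.mpr (fun r hr => hr)]
  exact hi

lemma indep_good_iff (G : RCG Res ι) (hind : RCG.IndepObjectives G)
    (pref : RCG.Pref) (P : RCG.Profile Res ι) (i : ι) :
    RCG.Good pref G P i ↔ RCG.Psat G P i := by
  cases pref with
  | ct => rfl
  | ca => exact ⟨fun h => h.1, fun h => ⟨h, indep_not_contentious G hind P⟩⟩
  | pca => exact ⟨fun h => h.1, fun h => ⟨h, indep_not_contentiousFor G hind P i h⟩⟩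

end Aux

/-- with independent objectives the three notions of Nash equilibrium
coincide: `NE^ct(G) = NE^ca(G) = NE^pca(G)`. -/
theorem indep_NE_coincide {Res ι : Type*} [Fintype ι]
    (G : RCG Res ι) (hind : RCG.IndepObjectives G) :
    ∀ P : RCG.Profile Res ι,
      (RCG.NE .ct G P ↔ RCG.NE .ca G P) ∧ (RCG.NE .ca G P ↔ RCG.NE .pca G P) := by
  intro P
  have hgood : ∀ (p q : RCG.Pref) (Q : RCG.Profile Res ι) (i : ι),
      RCG.Good p G Q i ↔ RCG.Good q G Q i := fun p q Q i =>
    (indep_good_iff G hind p Q i).trans (indep_good_iff G hind q Q i).symm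
  have hpref : ∀ (p q : RCG.Pref) (i : ι) (Q R : RCG.Profile Res ι),
      RCG.Prefers p G i Q R ↔ RCG.Prefers q G i Q R := by
    intro p q i Q R
    unfold RCG.Prefers
    rw [hgood p q, hgood p q]
  have hne : ∀ (p q : RCG.Pref), RCG.NE p G P ↔ RCG.NE q G P := by
    intro p q
    unfold RCG.NE RCG.ProfDev
    simp only [hpref p q]
  exact ⟨hne .ct .ca, hne .ca .pca⟩
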